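/- For any central arrangement A and any m ≥ 1, the Euler operator θ_E = Σ_{|a|=m} (m!/a!) x^a ∂^a belongs to D^(m)(A); in fact θ_E(α_H x^b) = m! α_H x^b for every H ∈ A and every multi-index b with |b| = m − 1. -/

import Mathlib

open MvPolynomial

/-- The operator `∂^a = ∂_1^{a_1} ⋯ ∂_ℓ^{a_ℓ}` on `S = K[x_1,…,x_ℓ]`. -/
noncomputable def pdOp (K : Type) [CommRing K] {ℓ : ℕ} (a : Fin ℓ →₀ ℕ) :
    Module.End K (MvPolynomial (Fin ℓ) K) :=
  (List.ofFn fun i : Fin ℓ =>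
    ((pderiv i : Derivation K (MvPolynomial (Fin ℓ) K) (MvPolynomial (Fin ℓ) K)).toLinearMap) ^ (a i)).prod

/-- Multiplication by a polynomial, as a `K`-endomorphism of `S`. -/
noncomputable def mulOp (K : Type) [CommRing K] {ℓ : ℕ} (p : MvPolynomial (Fin ℓ) K) :
    Module.End K (MvPolynomial (Fin ℓ) K) :=
  LinearMap.mulLeft K p

/-- total degree `|a|` of a multi-index. -/
def mdeg {ℓ : ℕ} (a : Fin ℓ →₀ ℕ) : ℕ := a.sum fun _ n => n

/-- `a! = a_1! ⋯ a_ℓ!`. -/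
def mfact {ℓ : ℕ} (a : Fin ℓ →₀ ℕ) : ℕ := a.prod fun _ n => n.factorial

/-- The operator `Σ_a c_a ∂^a` from a finitely supported coefficient family. -/
noncomputable def sumOp (K : Type) [CommRing K] {ℓ : ℕ}
    (c : (Fin ℓ →₀ ℕ) →₀ MvPolynomial (Fin ℓ) K) :
    Module.End K (MvPolynomial (Fin ℓ) K) :=
  c.sum fun a p => p • pdOp K a

/-- `D^{(m)}(S) = ⊕_{|a|=m} S ∂^a`, as an `S`-submodule of `End_K(S)`. -/
noncomputable def Dfull (K : Type) [CommRing K] {ℓ : ℕ} (m : ℕ) :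
    Submodule (MvPolynomial (Fin ℓ) K) (Module.End K (MvPolynomial (Fin ℓ) K)) :=
  Submodule.span _ {θ | ∃ a : Fin ℓ →₀ ℕ, mdeg a = m ∧ θ = pdOp K a}

/-- Operators preserving the principal ideal `Q·S`. -/
noncomputable def stabMod (K : Type) [CommRing K] {ℓ : ℕ} (Q : MvPolynomial (Fin ℓ) K) :
    Submodule (MvPolynomial (Fin ℓ) K) (Module.End K (MvPolynomial (Fin ℓ) K)) where
  carrier := {θ | ∀ f, θ (Q * f) ∈ Ideal.span {Q}}
  add_mem' := by
    intro θ η hθ hη f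
    simpa using add_mem (hθ f) (hη f)
  zero_mem' := by intro f; simp
  smul_mem' := by
    intro p θ hθ f
    simpa [LinearMap.smul_apply, smul_eq_mul] using Ideal.mul_mem_left _ p (hθ f)

/-- `D^{(m)}` of (the ideal generated by) `Q`:
operators of order `m` preserving `Q·S`. For an arrangement with defining polynomial `Q`
this is `D^{(m)}(𝒜)`. -/
noncomputable def Dmod (K : Type) [CommRing K] {ℓ : ℕ} (m : ℕ) (Q : MvPolynomial (Fin ℓ) K) :
    Submodule (MvPolynomial (Fin ℓ) K) (Module.End K (MvPolynomial (Fin ℓ) K)) :=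
  Dfull K m ⊓ stabMod K Q

/-- `θ` is a homogeneous operator of order `m` and degree `d`. -/
def IsHomOp (K : Type) [CommRing K] {ℓ : ℕ} (m d : ℕ)
    (θ : Module.End K (MvPolynomial (Fin ℓ) K)) : Prop :=
  ∃ c : (Fin ℓ →₀ ℕ) →₀ MvPolynomial (Fin ℓ) K,
    (∀ a ∈ c.support, mdeg a = m) ∧ (∀ a, (c a).IsHomogeneous d) ∧ θ = sumOp K c

/-- A central hyperplane arrangement in `K^ℓ`, given by its (pairwise coprime,
nonzero, homogeneous of degree one) defining linear forms. -/
structure Arrangement (K : Type) [Field K] (ℓ : ℕ) where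
  forms : Finset (MvPolynomial (Fin ℓ) K)
  hom : ∀ α ∈ forms, α.IsHomogeneous 1
  ne_zero : ∀ α ∈ forms, α ≠ 0
  coprime : ∀ α ∈ forms, ∀ β ∈ forms, α ≠ β → IsCoprime α β

/-- The defining polynomial `Q = ∏_{H ∈ 𝒜} α_H`. -/
noncomputable def Arrangement.defQ {K : Type} [Field K] {ℓ : ℕ} (A : Arrangement K ℓ) :
    MvPolynomial (Fin ℓ) K :=
  ∏ α ∈ A.forms, α

/-- The coefficient matrix `M_m(θ_1,…,θ_s)` with entry `θ_j(x^{a(i)})/a(i)!`,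
for a chosen ordering `e` of the degree-`m` multi-indices. -/
noncomputable def coeffMat (K : Type) [Field K] {ℓ s : ℕ}
    (θ : Fin s → Module.End K (MvPolynomial (Fin ℓ) K))
    (e : Fin s → (Fin ℓ →₀ ℕ)) : Matrix (Fin s) (Fin s) (MvPolynomial (Fin ℓ) K) :=
  fun i j => C ((mfact (e i) : K)⁻¹) * (θ j (monomial (e i) 1))




open Finset in
/-- Multivariate Vandermonde over `piAntidiag`. -/
lemma vand_pi {ι : Type*} [DecidableEq ι] (s : Finset ι) (d : ι → ℕ) (m : ℕ) :
    ∑ f ∈ s.piAntidiag m, ∏ i ∈ s, (d i).choose (f i) = (∑ i ∈ s, d i).choose m := by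
  induction s using Finset.cons_induction generalizing m with
  | empty =>
      rw [piAntidiag_empty]
      split_ifs with h
      · subst h; simp
      · simp [Nat.choose_eq_zero_of_lt (Nat.pos_of_ne_zero h)]
  | cons i s hi ih =>
      rw [piAntidiag_cons, sum_disjiUnion, sum_cons, Nat.add_choose_eq]
      refine Finset.sum_congr rfl ?_
      rintro ⟨k1, k2⟩ hp
      rw [Finset.sum_map]
      have : ∀ g ∈ s.piAntidiag k2,
          (∏ j ∈ cons i s hi,
            (d j).choose ((addRightEmbedding fun t => if t = i then k1 else 0) g j))
            = (d i).choose k1 * ∏ j ∈ s, (d j).choose (g j) := by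
        intro g hg
        rw [mem_piAntidiag] at hg
        rw [prod_cons]
        congr 1
        · have hg0 : g i = 0 := by
            by_contra h
            exact hi (hg.2 i h)
          simp [addRightEmbedding_apply, hg0]
        · refine Finset.prod_congr rfl fun j hj => ?_
          have : j ≠ i := fun h => hi (h ▸ hj)
          simp [addRightEmbedding_apply, this]
      rw [Finset.sum_congr rfl this, ← Finset.mul_sum, ih]

open Finset in
/-- Multivariate Vandermonde over `finsuppAntidiag`. -/
lemma vand_finsupp {ι : Type*} [DecidableEq ι] (s : Finset ι) (d : ι → ℕ) (m : ℕ) :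
    ∑ a ∈ s.finsuppAntidiag m, ∏ i ∈ s, (d i).choose (a i) = (∑ i ∈ s, d i).choose m := by
  rw [← vand_pi s d m]
  simp only [Finset.finsuppAntidiag]
  rw [Finset.sum_map]
  exact Finset.sum_attach (s.piAntidiag m) fun f => ∏ i ∈ s, (d i).choose (f i)

section Aux

variable {K : Type} [CommRing K] {ℓ : ℕ}

lemma pow_pderiv_monomial (i : Fin ℓ) (k : ℕ) :
    ∀ (d : Fin ℓ →₀ ℕ) (r : K),
    (((pderiv i : Derivation K (MvPolynomial (Fin ℓ) K) (MvPolynomial (Fin ℓ) K)).toLinearMap) ^ k)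
        (monomial d r)
      = monomial (d - Finsupp.single i k) (r * ((d i).descFactorial k : K)) := by
  induction k with
  | zero => intro d r; simp
  | succ k ih =>
      intro d r
      rw [pow_succ, Module.End.mul_apply]
      have h1 : ((pderiv i : Derivation K (MvPolynomial (Fin ℓ) K)
          (MvPolynomial (Fin ℓ) K)).toLinearMap) (monomial d r)
          = monomial (d - Finsupp.single i 1) (r * (d i : K)) := by
        simp [pderiv_monomial]
      rw [h1, ih]
      have he : d - Finsupp.single i 1 - Finsupp.single i k = d - Finsupp.single i (k + 1) := by
        rw [tsub_tsub, ← Finsupp.single_add, add_comm]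
      have hc : (d - (Finsupp.single i 1 : Fin ℓ →₀ ℕ)) i = d i - 1 := by
        rw [Finsupp.tsub_apply, Finsupp.single_eq_same]
      rw [he, hc]
      congr 1
      rw [mul_assoc]
      congr 1
      have : (d i) * (d i - 1).descFactorial k = (d i).descFactorial (k + 1) := by
        rcases Nat.eq_zero_or_pos (d i) with h | h
        · simp [h]
        · obtain ⟨n, hn⟩ := Nat.exists_eq_succ_of_ne_zero (Nat.pos_iff_ne_zero.mp h)
          rw [hn]
          simpa using (Nat.succ_descFactorial_succ n k).symm
      exact_mod_cast congrArg (Nat.cast : ℕ → K) this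

lemma list_single_sum_apply_zero (a : Fin ℓ →₀ ℕ) (i : Fin ℓ) :
    ∀ t : List (Fin ℓ), i ∉ t → ((t.map fun j => Finsupp.single j (a j)).sum) i = 0 := by
  intro t
  induction t with
  | nil => simp
  | cons j u ihu =>
      intro hi
      simp only [List.map_cons, List.sum_cons, Finsupp.add_apply]
      rw [Finsupp.single_apply, if_neg, ihu (fun h => hi (List.mem_cons_of_mem j h))]
      · intro h
        exact hi (h ▸ List.mem_cons_self (a := j) (l := u))

lemma list_pd_monomial (a d : Fin ℓ →₀ ℕ) (r : K) :
    ∀ l : List (Fin ℓ), l.Nodup →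
      ((l.map fun i =>
          ((pderiv i : Derivation K (MvPolynomial (Fin ℓ) K)
            (MvPolynomial (Fin ℓ) K)).toLinearMap) ^ (a i)).prod) (monomial d r)
        = monomial (d - (l.map fun i => Finsupp.single i (a i)).sum)
            (r * (((l.map fun i => (d i).descFactorial (a i)).prod : ℕ) : K)) := by
  intro l
  induction l with
  | nil => intro _; simp
  | cons i t ih =>
      intro hl
      have hit : i ∉ t := (List.nodup_cons.mp hl).1
      have ht : t.Nodup := (List.nodup_cons.mp hl).2
      simp only [List.map_cons, List.prod_cons, Module.End.mul_apply, List.sum_cons]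
      rw [ih ht, pow_pderiv_monomial]
      have hdi : (d - (t.map fun j => Finsupp.single j (a j)).sum) i = d i := by
        rw [Finsupp.tsub_apply, list_single_sum_apply_zero a i t hit, Nat.sub_zero]
      rw [hdi, tsub_tsub, add_comm ((t.map fun i => Finsupp.single i (a i)).sum)]
      rw [Nat.cast_mul]
      ring_nf

lemma pdOp_monomial (a d : Fin ℓ →₀ ℕ) (r : K) :
    pdOp K a (monomial d r)
      = monomial (d - a) (r * ((∏ i : Fin ℓ, (d i).descFactorial (a i) : ℕ) : K)) := by
  rw [pdOp, List.ofFn_eq_map, list_pd_monomial a d r (List.finRange ℓ) (List.nodup_finRange ℓ)]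
  rw [← Fin.sum_univ_def, ← Fin.prod_univ_def, Finsupp.univ_sum_single]

lemma mdeg_eq (d : Fin ℓ →₀ ℕ) : mdeg d = ∑ i : Fin ℓ, d i :=
  Finsupp.sum_fintype _ _ (fun _ => rfl)

lemma mfact_eq (a : Fin ℓ →₀ ℕ) : mfact a = ∏ i : Fin ℓ, (a i).factorial :=
  Finsupp.prod_fintype _ _ (fun _ => rfl)

lemma mfact_ne_zero (a : Fin ℓ →₀ ℕ) : (mfact a : ℕ) ≠ 0 := by
  rw [mfact_eq]
  exact Finset.prod_ne_zero_iff.mpr fun i _ => (Nat.factorial_pos _).ne'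

end Aux

section AuxField

variable {K : Type} [Field K] [CharZero K] {ℓ : ℕ}

/-- The coefficient family of the Euler operator of order `m`. -/
noncomputable def cE (K : Type) [Field K] {ℓ : ℕ} (m : ℕ) :
    (Fin ℓ →₀ ℕ) →₀ MvPolynomial (Fin ℓ) K :=
  Finsupp.onFinset (Finset.finsuppAntidiag (Finset.univ : Finset (Fin ℓ)) m)
    (fun a => if mdeg a = m then C ((m.factorial : K) / (mfact a : K)) * monomial a 1 else 0)
    (fun a h => by
      rw [Finset.mem_finsuppAntidiag]
      by_cases hma : mdeg a = m
      · exact ⟨by rw [← mdeg_eq]; exact hma, Finset.subset_univ _⟩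
      · exact absurd (if_neg hma) h)

lemma cE_apply_of {m : ℕ} {a : Fin ℓ →₀ ℕ} (ha : mdeg a = m) :
    cE K m a = C ((m.factorial : K) / (mfact a : K)) * monomial a 1 := by
  simp [cE, ha]

lemma cE_apply_of_ne {m : ℕ} {a : Fin ℓ →₀ ℕ} (ha : mdeg a ≠ m) : cE K m a = 0 := by
  simp [cE, ha]

lemma cE_term (m : ℕ) {a : Fin ℓ →₀ ℕ} (ha : mdeg a = m) (d : Fin ℓ →₀ ℕ) (r : K) :
    (cE K m a) * pdOp K a (monomial d r)
      = ((m.factorial * ∏ i : Fin ℓ, (d i).choose (a i) : ℕ) : K) • monomial d r := by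
  rw [cE_apply_of ha, pdOp_monomial, mul_assoc, monomial_mul, C_mul_monomial, one_mul]
  have hdesc : (∏ i : Fin ℓ, (d i).descFactorial (a i))
      = mfact a * ∏ i : Fin ℓ, (d i).choose (a i) := by
    rw [mfact_eq, ← Finset.prod_mul_distrib]
    exact Finset.prod_congr rfl fun i _ => Nat.descFactorial_eq_factorial_mul_choose _ _
  by_cases hle : a ≤ d
  · have hexp : a + (d - a) = d := add_tsub_cancel_of_le hle
    rw [hexp, hdesc]
    rw [smul_monomial, smul_eq_mul]
    congr 1
    have hm0 : ((mfact a : ℕ) : K) ≠ 0 := Nat.cast_ne_zero.mpr (mfact_ne_zero a)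
    push_cast
    field_simp
  · obtain ⟨i, hi⟩ : ∃ i, d i < a i := by
      by_contra h
      push_neg at h
      exact hle (Finsupp.le_def.mpr fun i => h i)
    have h1 : (∏ i : Fin ℓ, (d i).descFactorial (a i)) = 0 :=
      Finset.prod_eq_zero (Finset.mem_univ i) (Nat.descFactorial_eq_zero_iff_lt.mpr hi)
    have h2 : (∏ i : Fin ℓ, (d i).choose (a i)) = 0 :=
      Finset.prod_eq_zero (Finset.mem_univ i) (Nat.choose_eq_zero_of_lt hi)
    rw [h1, h2]
    simp

lemma sumOp_cE_monomial (m : ℕ) (d : Fin ℓ →₀ ℕ) (r : K) :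
    sumOp K (cE K m) (monomial d r)
      = ((m.factorial * (mdeg d).choose m : ℕ) : K) • monomial d r := by
  rw [sumOp, Finsupp.sum, LinearMap.sum_apply]
  have hsub : (cE K m (ℓ := ℓ)).support ⊆ Finset.finsuppAntidiag (Finset.univ : Finset (Fin ℓ)) m :=
    Finsupp.support_onFinset_subset
  rw [Finset.sum_subset hsub
    (fun a _ ha => by
      rw [Finsupp.notMem_support_iff.mp ha]
      simp)]
  have key : ∀ a ∈ Finset.finsuppAntidiag (Finset.univ : Finset (Fin ℓ)) m,
      ((cE K m a) • pdOp K a) (monomial d r)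
        = ((m.factorial * ∏ i : Fin ℓ, (d i).choose (a i) : ℕ) : K) • monomial d r := by
    intro a ha
    rw [Finset.mem_finsuppAntidiag] at ha
    have hma : mdeg a = m := by rw [mdeg_eq]; exact ha.1
    rw [LinearMap.smul_apply, smul_eq_mul, cE_term m hma]
  rw [Finset.sum_congr rfl key, ← Finset.sum_smul, ← Nat.cast_sum, ← Finset.mul_sum,
    vand_finsupp, ← mdeg_eq]

lemma sumOp_cE_homog (m D : ℕ) {p : MvPolynomial (Fin ℓ) K} (hp : p.IsHomogeneous D) :
    sumOp K (cE K m) p = ((m.factorial * D.choose m : ℕ) : K) • p := by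
  conv_lhs => rw [p.as_sum]
  rw [map_sum]
  have key : ∀ d ∈ p.support,
      sumOp K (cE K m) (monomial d (coeff d p))
        = ((m.factorial * D.choose m : ℕ) : K) • monomial d (coeff d p) := by
    intro d hd
    rw [sumOp_cE_monomial]
    have hdeg : mdeg d = D := by
      have h := hp (mem_support_iff.mp hd)
      rw [show (1 : Fin ℓ → ℕ) = fun _ => 1 from rfl, ← Finsupp.degree_eq_weight_one] at h
      exact h
    rw [hdeg]
  rw [Finset.sum_congr rfl key, ← Finset.smul_sum, ← p.as_sum]

end AuxField

/-- The Euler operator `θ_E = Σ_{|a|=m} (m!/a!) x^a ∂^a` lies in `D^{(m)}(𝒜)`, and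
`θ_E(α_H x^b) = m! · α_H x^b` for every `H ∈ 𝒜` and `|b| = m-1`. -/
theorem euler_operator_mem (K : Type) [Field K] [CharZero K] {ℓ : ℕ}
    (A : Arrangement K ℓ) (m : ℕ) (hm : 1 ≤ m) :
    ∃ c : (Fin ℓ →₀ ℕ) →₀ MvPolynomial (Fin ℓ) K,
      (∀ a : Fin ℓ →₀ ℕ, mdeg a = m →
        c a = C ((m.factorial : K) / (mfact a : K)) * monomial a 1) ∧
      (∀ a : Fin ℓ →₀ ℕ, mdeg a ≠ m → c a = 0) ∧
      sumOp K c ∈ Dmod K m A.defQ ∧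
      ∀ α ∈ A.forms, ∀ b : Fin ℓ →₀ ℕ, mdeg b = m - 1 →
        sumOp K c (α * monomial b 1) =
          (m.factorial : MvPolynomial (Fin ℓ) K) * (α * monomial b 1) := by
  classical
  refine ⟨cE K m, fun a ha => cE_apply_of ha, fun a ha => cE_apply_of_ne ha, ?_, ?_⟩
  · rw [Dmod, Submodule.mem_inf]
    constructor
    · rw [sumOp, Finsupp.sum]
      refine Submodule.sum_mem _ fun a ha => ?_
      have hma : mdeg a = m := by
        by_contra h
        exact Finsupp.mem_support_iff.mp ha (cE_apply_of_ne h)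
      exact Submodule.smul_mem _ _ (Submodule.subset_span ⟨a, hma, rfl⟩)
    · intro f
      have hQ : A.defQ.IsHomogeneous (∑ _α ∈ A.forms, 1) :=
        MvPolynomial.IsHomogeneous.prod A.forms _ _ fun α hα => A.hom α hα
      have hf : A.defQ * f = ∑ k ∈ Finset.range (f.totalDegree + 1),
          A.defQ * (homogeneousComponent k f) := by
        rw [← Finset.mul_sum, sum_homogeneousComponent]
      rw [hf, map_sum]
      refine Submodule.sum_mem _ fun k _ => ?_
      rw [sumOp_cE_homog m _ (hQ.mul (homogeneousComponent_isHomogeneous k f))]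
      rw [Ideal.mem_span_singleton]
      exact ⟨C ((m.factorial * (((∑ _α ∈ A.forms, 1) + k).choose m) : ℕ) : K) *
        homogeneousComponent k f, by rw [smul_eq_C_mul]; ring⟩
  · intro α hα b hb
    have hαh : α.IsHomogeneous 1 := A.hom α hα
    have hbh : (monomial b (1 : K)).IsHomogeneous (m - 1) :=
      isHomogeneous_monomial _ hb
    have hp : (α * monomial b (1 : K)).IsHomogeneous m := by
      have := hαh.mul hbh
      rwa [show 1 + (m - 1) = m by omega] at this
    rw [sumOp_cE_homog m m hp, Nat.choose_self, mul_one]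
    rw [smul_eq_C_mul, map_natCast]
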